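/- Let u : ℕ → ℤ be a linear division sequence and suppose that u_m = 0 for some integer m ≥ 1. Then there exists a nonempty finite set D of positive integers such that for every n ≥ 1: u_n = 0 if and only if d divides n for some d ∈ D. -/

import Mathlib

open Finset

namespace LDSaux

/-- Satisfies the recurrence. -/
def SatRec (k : ℕ) (c : ℕ → ℤ) (v : ℕ → ℤ) : Prop :=
  ∀ n, k ≤ n → v n = ∑ i ∈ Finset.Icc 1 k, c i * v (n - i)

lemma satRec_comb {k : ℕ} {c : ℕ → ℤ} {w : ℕ → ℕ → ℤ} (a : ℕ → ℤ) (s : Finset ℕ)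
    (hw : ∀ j ∈ s, SatRec k c (w j)) :
    SatRec k c (fun n => ∑ j ∈ s, a j * w j n) := by
  intro n hn
  calc ∑ j ∈ s, a j * w j n
      = ∑ j ∈ s, ∑ i ∈ Finset.Icc 1 k, a j * (c i * w j (n - i)) := by
        refine Finset.sum_congr rfl fun j hj => ?_
        rw [hw j hj n hn, Finset.mul_sum]
    _ = ∑ i ∈ Finset.Icc 1 k, ∑ j ∈ s, a j * (c i * w j (n - i)) := Finset.sum_comm
    _ = ∑ i ∈ Finset.Icc 1 k, c i * ∑ j ∈ s, a j * w j (n - i) := by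
        refine Finset.sum_congr rfl fun i _ => ?_
        rw [Finset.mul_sum]
        exact Finset.sum_congr rfl fun j _ => by ring

lemma satRec_unique {k : ℕ} {c : ℕ → ℤ} {v w : ℕ → ℤ} (hk : 1 ≤ k)
    (hv : SatRec k c v) (hw : SatRec k c w)
    (h0 : ∀ i < k, v i = w i) : ∀ n, v n = w n := by
  intro n
  induction n using Nat.strong_induction_on with
  | _ n ih =>
    by_cases h : n < k
    · exact h0 n h
    · push_neg at h
      rw [hv n h, hw n h]
      refine Finset.sum_congr rfl fun i hi => ?_
      rw [Finset.mem_Icc] at hi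
      rw [ih (n - i) (by omega)]

noncomputable def solSeq (k : ℕ) (c : ℕ → ℤ) (init : ℕ → ℤ) : ℕ → ℤ
  | n =>
    if h : n < k then init n
    else ∑ i ∈ (Finset.Icc 1 k).attach, c i.1 * solSeq k c init (n - i.1)
  termination_by n => n
  decreasing_by
    have := Finset.mem_Icc.mp i.2; omega

lemma solSeq_lt {k : ℕ} {c init : ℕ → ℤ} {n : ℕ} (h : n < k) :
    solSeq k c init n = init n := by
  rw [solSeq]; simp [h]

lemma solSeq_rec {k : ℕ} {c init : ℕ → ℤ} : SatRec k c (solSeq k c init) := by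
  intro n hn
  rw [solSeq]
  rw [dif_neg (by omega : ¬ n < k)]
  exact Finset.sum_attach (Finset.Icc 1 k) (fun i => c i * solSeq k c init (n - i))

noncomputable def basis (k : ℕ) (c : ℕ → ℤ) (j : ℕ) : ℕ → ℤ :=
  solSeq k c (fun x => if x = j then 1 else 0)

lemma basis_rec {k : ℕ} {c : ℕ → ℤ} (j : ℕ) : SatRec k c (basis k c j) := solSeq_rec

lemma decomp {k : ℕ} {c : ℕ → ℤ} {v : ℕ → ℤ} (hk : 1 ≤ k) (hv : SatRec k c v) (n : ℕ) :
    v n = ∑ j ∈ Finset.range k, v j * basis k c j n := by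
  refine satRec_unique hk hv (satRec_comb _ _ fun j _ => basis_rec j) ?_ n
  intro i hi
  have h1 : ∀ j ∈ Finset.range k, v j * basis k c j i = if j = i then v i else 0 := by
    intro j hj
    rw [basis, solSeq_lt hi]
    by_cases h : i = j
    · subst h; simp
    · simp [h, Ne.symm h]
  rw [Finset.sum_congr rfl h1, Finset.sum_ite_eq' (Finset.range k) i (fun _ => v i)]
  simp [Finset.mem_range.mpr hi]

/-- strong period: period of every solution of the recurrence, modulo N. -/
def StrongPer (k : ℕ) (c : ℕ → ℤ) (N : ℤ) (p : ℕ) : Prop :=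
  ∀ v, SatRec k c v → ∀ n, N ∣ v (n + p) - v n

lemma exists_strongPer_prime {k : ℕ} {c : ℕ → ℤ} (hk : 1 ≤ k) {q : ℕ} (hq : q.Prime)
    (hcq : ¬ (q : ℤ) ∣ c k) :
    ∃ Λ : ℕ, 1 ≤ Λ ∧ StrongPer k c (q : ℤ) Λ := by
  haveI : NeZero q := ⟨hq.ne_zero⟩
  set E : ℕ → ℕ → ℤ := basis k c with hE
  have hErec : ∀ j, SatRec k c (E j) := fun j => basis_rec j
  let σ : ℕ → (Fin k → Fin k → ZMod q) := fun n j i => ((E j.1 (n + i.1) : ℤ) : ZMod q)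
  obtain ⟨x, y, hxy, hσxy⟩ := Finite.exists_ne_map_eq_of_infinite σ
  obtain ⟨a, b, hab, hσab⟩ : ∃ a b, a < b ∧ σ a = σ b := by
    rcases hxy.lt_or_gt with h | h
    exacts [⟨x, y, h, hσxy⟩, ⟨y, x, h, hσxy.symm⟩]
  set p : ℕ := b - a with hp
  have hp1 : 1 ≤ p := by omega
  set P : ℕ → Prop := fun n => ∀ j < k, ∀ i < k, (q:ℤ) ∣ E j (n + p + i) - E j (n + i)
    with hPdef
  have hPa : P a := by
    intro j hj i hi
    have h1 : σ a ⟨j, hj⟩ ⟨i, hi⟩ = σ b ⟨j, hj⟩ ⟨i, hi⟩ := by rw [hσab]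
    have h2 : (q:ℤ) ∣ E j (b + i) - E j (a + i) :=
      ((ZMod.intCast_eq_intCast_iff _ _ _).mp h1).dvd
    rwa [show a + p + i = b + i from by omega]
  have forward : ∀ n, P n → P (n + 1) := by
    intro n hP j hj i hi
    rcases Nat.lt_or_ge (i + 1) k with h | h
    · rw [show n + 1 + p + i = n + p + (i+1) from by omega,
        show n + 1 + i = n + (i+1) from by omega]
      exact hP j hj (i+1) h
    · rw [show n + 1 + i = n + k from by omega,
        show n + 1 + p + i = (n + p) + k from by omega]
      rw [hErec j (n + k) (by omega), hErec j (n + p + k) (by omega),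
        ← Finset.sum_sub_distrib]
      refine Finset.dvd_sum fun i' hi' => ?_
      rw [Finset.mem_Icc] at hi'
      rw [show n + p + k - i' = n + p + (k - i') from by omega,
        show n + k - i' = n + (k - i') from by omega, ← mul_sub]
      exact Dvd.dvd.mul_left (hP j hj (k - i') (by omega)) _
  have backward : ∀ n, P (n + 1) → P n := by
    intro n hP j hj i hi
    rcases Nat.lt_or_ge 0 i with h | h
    · rw [show n + p + i = n + 1 + p + (i-1) from by omega,
        show n + i = n + 1 + (i-1) from by omega]
      exact hP j hj (i-1) (by omega)
    · have hi0 : i = 0 := by omega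
      subst hi0
      have hsplit : ∀ m : ℕ, c k * E j m
          = E j (m + k) - ∑ i' ∈ Finset.Icc 1 (k-1), c i' * E j (m + k - i') := by
        intro m
        have h1 := hErec j (m + k) (by omega)
        have h2 : Finset.Icc 1 k = Finset.Icc 1 ((k-1)+1) := by
          rw [Nat.sub_add_cancel hk]
        rw [h2, Finset.sum_Icc_succ_top (by omega : 1 ≤ (k-1)+1)] at h1
        rw [Nat.sub_add_cancel hk] at h1
        rw [h1, show m + k - k = m from by omega]
        ring
      have key : (q:ℤ) ∣ c k * (E j (n + p) - E j n) := by
        have heq : c k * (E j (n + p) - E j n)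
            = (E j (n + p + k) - E j (n + k))
              - ∑ i' ∈ Finset.Icc 1 (k-1),
                  c i' * (E j (n + p + k - i') - E j (n + k - i')) := by
          rw [mul_sub, hsplit, hsplit]
          rw [show ∀ s : Finset ℕ, ∑ i' ∈ s, c i' * (E j (n + p + k - i') - E j (n + k - i'))
              = ∑ i' ∈ s, (c i' * E j (n + p + k - i') - c i' * E j (n + k - i')) from
            fun s => Finset.sum_congr rfl fun i' _ => by ring]
          rw [Finset.sum_sub_distrib]
          ring
        rw [heq]
        refine dvd_sub ?_ (Finset.dvd_sum fun i' hi' => ?_)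
        · have h2 := hP j hj (k-1) (by omega)
          rwa [show n + 1 + p + (k-1) = n + p + k from by omega,
            show n + 1 + (k-1) = n + k from by omega] at h2
        · rw [Finset.mem_Icc] at hi'
          rw [show n + p + k - i' = n + 1 + p + (k - i' - 1) from by omega,
            show n + k - i' = n + 1 + (k - i' - 1) from by omega]
          exact Dvd.dvd.mul_left (hP j hj (k - i' - 1) (by omega)) _
      have hqp : Prime ((q:ℤ)) := Int.prime_iff_natAbs_prime.mpr (by simpa using hq)
      rcases hqp.dvd_mul.mp key with h' | h'
      · exact absurd h' hcq
      · simpa using h'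
  have up : ∀ d, P (a + d) := by
    intro d
    induction d with
    | zero => simpa using hPa
    | succ d ih => exact (show a + (d+1) = (a + d) + 1 from rfl) ▸ forward _ ih
  have allP : ∀ n, P n := by
    have down : ∀ d, P (a - d) := by
      intro d
      induction d with
      | zero => simpa using hPa
      | succ d ih =>
        rcases le_or_gt a d with h' | h'
        · rwa [show a - (d+1) = a - d from by omega]
        · exact backward _ (by rwa [show a - (d+1) + 1 = a - d from by omega])
    intro n
    rcases le_or_gt a n with h | h
    · have := up (n - a); rwa [show a + (n - a) = n from by omega] at this
    · have := down (a - n); rwa [show a - (a - n) = n from by omega] at this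
  refine ⟨p, hp1, ?_⟩
  intro v hv n
  have hdec1 := decomp hk hv (n + p)
  have hdec2 := decomp hk hv n
  rw [hdec1, hdec2, ← Finset.sum_sub_distrib]
  refine Finset.dvd_sum fun j hj => ?_
  rw [← mul_sub]
  refine Dvd.dvd.mul_left ?_ _
  have := allP n j (Finset.mem_range.mp hj) 0 (by omega)
  simpa using this

lemma strongPer_lift {k : ℕ} {c : ℕ → ℤ} {q : ℕ} (hq2 : 2 ≤ q) {s : ℕ} (hs : 1 ≤ s)
    {p : ℕ} (h : StrongPer k c ((q:ℤ)^s) p) :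
    StrongPer k c ((q:ℤ)^(s+1)) (p * q) := by
  intro v hv n
  set w : ℕ → ℤ := fun x => (v (x + p) - v x) / (q:ℤ)^s with hw
  have hq0 : (0:ℤ) < (q:ℤ)^s := by positivity
  have hwx : ∀ x, ((q:ℤ)^s) * w x = v (x + p) - v x := fun x =>
    Int.mul_ediv_cancel' (h v hv x)
  have hwrec : SatRec k c w := by
    intro x hx
    apply mul_left_cancel₀ (ne_of_gt hq0)
    rw [hwx x, Finset.mul_sum]
    rw [hv (x + p) (le_trans hx (Nat.le_add_right _ _)), hv x hx, ← Finset.sum_sub_distrib]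
    refine Finset.sum_congr rfl fun i hi => ?_
    rw [Finset.mem_Icc] at hi
    rw [show x + p - i = (x - i) + p from by omega, ← mul_sub, ← hwx (x - i)]
    ring
  have tel : ∀ (z M : ℕ), v (z + M * p) - v z
      = ∑ i ∈ Finset.range M, ((q:ℤ)^s * w (z + i * p)) := by
    intro z M
    have h0 := Finset.sum_range_sub (fun i => v (z + i * p)) M
    calc v (z + M * p) - v z
        = (fun i => v (z + i * p)) M - (fun i => v (z + i * p)) 0 := by simp
      _ = ∑ i ∈ Finset.range M, ((fun i => v (z + i * p)) (i+1) - (fun i => v (z + i * p)) i)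
          := h0.symm
      _ = ∑ i ∈ Finset.range M, ((q:ℤ)^s * w (z + i * p)) := by
          refine Finset.sum_congr rfl fun i _ => ?_
          simp only
          rw [show z + (i+1) * p = (z + i * p) + p from by ring, hwx]
  have hwdvd : ∀ i : ℕ, (q:ℤ) ∣ (w (n + i * p) - w n) := by
    intro i
    have h0 := Finset.sum_range_sub (fun j => w (n + j * p)) i
    have heq : w (n + i * p) - w n
        = ∑ j ∈ Finset.range i, (w (n + (j+1) * p) - w (n + j * p)) := by
      rw [h0]; simp
    rw [heq]
    refine Finset.dvd_sum fun j _ => ?_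
    have hq1 : (q:ℤ) ∣ (q:ℤ)^s := dvd_pow_self _ (by omega)
    refine dvd_trans hq1 ?_
    rw [show n + (j+1) * p = (n + j * p) + p from by ring]
    exact h w hwrec (n + j * p)
  have hsum : (q:ℤ) ∣ ∑ i ∈ Finset.range q, w (n + i * p) := by
    have heq : ∑ i ∈ Finset.range q, w (n + i * p)
        = (∑ i ∈ Finset.range q, (w (n + i * p) - w n)) + (q:ℤ) * w n := by
      rw [Finset.sum_sub_distrib]
      simp [Finset.sum_const, Finset.card_range]
    rw [heq]
    exact dvd_add (Finset.dvd_sum fun i _ => hwdvd i) ⟨w n, rfl⟩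
  have hfin : v (n + p * q) - v n = (q:ℤ)^s * ∑ i ∈ Finset.range q, w (n + i * p) := by
    rw [show p * q = q * p from mul_comm _ _, tel n q, Finset.mul_sum]
  rw [hfin, pow_succ]
  exact mul_dvd_mul_left _ hsum

lemma strongPer_pow {k : ℕ} {c : ℕ → ℤ} {q : ℕ} (hq2 : 2 ≤ q) {Λ : ℕ}
    (hΛ : StrongPer k c (q:ℤ) Λ) :
    ∀ t, 1 ≤ t → StrongPer k c ((q:ℤ)^t) (Λ * q^(t-1)) := by
  intro t ht
  induction t with
  | zero => omega
  | succ t ih =>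
    rcases Nat.eq_or_lt_of_le ht with h | h
    · have ht0 : t = 0 := by omega
      subst ht0
      simpa using hΛ
    · have ht1 : 1 ≤ t := by omega
      have hlift := strongPer_lift hq2 ht1 (ih ht1)
      have e : Λ * q^(t-1) * q = Λ * q^(t+1-1) := by
        rw [mul_assoc, ← pow_succ]
        congr 2
        omega
      rwa [e] at hlift

lemma dvd_u_gcd {k : ℕ} {c : ℕ → ℤ} {u : ℕ → ℤ} (hrec : SatRec k c u)
    (hdvd : ∀ m n : ℕ, 1 ≤ m → m ∣ n → u m ∣ u n)
    {N : ℤ} {p : ℕ} (hp : 1 ≤ p) (hper : StrongPer k c N p)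
    {n : ℕ} (hn : 1 ≤ n) (hun : u n = 0) :
    N ∣ u (Nat.gcd n p) := by
  set g := Nat.gcd n p with hg
  have hbez := Nat.gcd_eq_gcd_ab n p
  set A := Nat.gcdA n p with hA
  set Bz := Nat.gcdB n p with hB
  set K : ℤ := |A| + |Bz| + 1 with hK
  have hp' : (1:ℤ) ≤ (p:ℤ) := by exact_mod_cast hp
  have hn' : (1:ℤ) ≤ (n:ℤ) := by exact_mod_cast hn
  have habsA := abs_nonneg A
  have habsB := abs_nonneg Bz
  have hnegA := neg_abs_le A
  have hnegB := neg_abs_le Bz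
  have hK1 : (1:ℤ) ≤ K := by rw [hK]; linarith
  have hKp : K ≤ K * p := le_mul_of_one_le_right (by linarith) hp'
  have hKn : K ≤ K * n := le_mul_of_one_le_right (by linarith) hn'
  have hBle : Bz ≤ |Bz| := le_abs_self Bz
  have hS : 1 ≤ A + K * p := by rw [hK] at hKp ⊢; linarith
  have hW : 0 ≤ K * n - Bz := by rw [hK] at hKn ⊢; linarith
  set S := (A + K * (p:ℤ)).toNat with hSdef
  set W := (K * (n:ℤ) - Bz).toNat with hWdef
  have h1 : ((S : ℤ)) = A + K * p := Int.toNat_of_nonneg (by omega)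
  have h2 : ((W : ℤ)) = K * n - Bz := Int.toNat_of_nonneg hW
  have hSW : S * n = g + W * p := by
    have hcast : (↑(S * n) : ℤ) = ↑(g + W * p) := by
      push_cast [h1, h2]
      rw [hg]
      push_cast [hbez]
      ring
    exact_mod_cast hcast
  have hSpos : 1 ≤ S := by omega
  have huS : u (S * n) = 0 := by
    have hd := hdvd n (S * n) hn ⟨S, by ring⟩
    rw [hun] at hd
    exact zero_dvd_iff.mp hd
  have htel : N ∣ u (g + W * p) - u g := by
    have h0 := Finset.sum_range_sub (fun i => u (g + i * p)) W
    have heq : u (g + W * p) - u g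
        = ∑ i ∈ Finset.range W, (u (g + (i+1) * p) - u (g + i * p)) := by
      rw [h0]; simp
    rw [heq]
    refine Finset.dvd_sum fun i _ => ?_
    rw [show g + (i+1) * p = (g + i * p) + p from by ring]
    exact hper u hrec (g + i * p)
  rw [← hSW, huS] at htel
  have : N ∣ -(u g) := by simpa using htel
  exact (dvd_neg.mp this)

/-- primitive zero: a zero with no smaller zero dividing it. -/
def Prim (u : ℕ → ℤ) (n : ℕ) : Prop :=
  1 ≤ n ∧ u n = 0 ∧ ∀ d, 1 ≤ d → d ∣ n → u d = 0 → d = n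

lemma exists_prim_dvd {u : ℕ → ℤ} : ∀ n, 1 ≤ n → u n = 0 → ∃ d, d ∣ n ∧ Prim u d := by
  intro n
  induction n using Nat.strong_induction_on with
  | _ n ih =>
    intro hn hun
    by_cases h : ∀ d, 1 ≤ d → d ∣ n → u d = 0 → d = n
    · exact ⟨n, dvd_rfl, hn, hun, h⟩
    · push_neg at h
      obtain ⟨d, hd1, hdn, hud, hne⟩ := h
      have hdlt : d < n := lt_of_le_of_ne (Nat.le_of_dvd (by omega) hdn) hne
      obtain ⟨e, he, hpe⟩ := ih d hdlt hd1 hud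
      exact ⟨e, he.trans hdn, hpe⟩

lemma prim_bound_aux {k : ℕ} {c : ℕ → ℤ} {u : ℕ → ℤ} (hrec : SatRec k c u)
    (hdvd : ∀ m n : ℕ, 1 ≤ m → m ∣ n → u m ∣ u n)
    {q Λ : ℕ} (hq : q.Prime) (hΛ1 : 1 ≤ Λ)
    (hΛ : StrongPer k c (q:ℤ) Λ) {n : ℕ} (hn : Prim u n) :
    ∃ e : ℕ, n ∣ Λ * q ^ e := by
  obtain ⟨hn1, hun, hmin⟩ := hn
  have hq2 : 2 ≤ q := hq.two_le
  have key : ∀ t : ℕ, ((q:ℤ))^(t+1) ∣ u (Nat.gcd n (Λ * q ^ t)) := by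
    intro t
    have hper := strongPer_pow hq2 hΛ (t+1) (by omega)
    rw [show t + 1 - 1 = t from by omega] at hper
    exact dvd_u_gcd hrec hdvd (Nat.one_le_iff_ne_zero.mpr (by positivity)) hper hn1 hun
  set F : ℕ → Fin (n+1) := fun t => ⟨Nat.gcd n (Λ * q ^ t),
    Nat.lt_succ_of_le (Nat.le_of_dvd (by omega) (Nat.gcd_dvd_left _ _))⟩ with hF
  obtain ⟨y, hy⟩ := Finite.exists_infinite_fiber F
  rw [Set.infinite_coe_iff] at hy
  set g : ℕ := (y : Fin (n+1)).1 with hgdef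
  have hfib : ∀ t, F t = y → Nat.gcd n (Λ * q ^ t) = g := by
    intro t ht
    rw [hgdef, ← ht]
  obtain ⟨t0, ht0⟩ := hy.nonempty
  have hgd : g ∣ n := by
    rw [← hfib t0 ht0]
    exact Nat.gcd_dvd_left _ _
  have hg1 : 1 ≤ g := by
    rw [← hfib t0 ht0]
    exact Nat.gcd_pos_of_pos_left _ (by omega)
  have hug : u g = 0 := by
    by_contra habs
    obtain ⟨t, ht, htgt⟩ := hy.exists_gt ((u g).natAbs)
    have h1 := key t
    rw [hfib t ht] at h1
    have h2 : q ^ (t+1) ∣ (u g).natAbs := by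
      have h3 := Int.natAbs_dvd_natAbs.mpr h1
      rwa [Int.natAbs_pow, Int.natAbs_natCast] at h3
    have h3 := Nat.le_of_dvd (Int.natAbs_pos.mpr habs) h2
    have h4 : t < 2 ^ t := Nat.lt_two_pow_self (n := t)
    have h5 : (2:ℕ) ^ (t+1) ≤ q ^ (t+1) := Nat.pow_le_pow_left hq2 _
    have h6 : (2:ℕ) ^ t ≤ 2 ^ (t+1) := Nat.pow_le_pow_right (by omega) (by omega)
    omega
  have hgn : g = n := hmin g hg1 hgd hug
  refine ⟨t0, ?_⟩
  have heq := hfib t0 ht0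
  rw [hgn] at heq
  rw [← heq]
  exact Nat.gcd_dvd_right _ _

end LDSaux

/-- A linear division sequence: an integer sequence satisfying a linear recurrence
with `c k ≠ 0` which is also a division sequence. -/
def IsLinearDivisionSequence (u : ℕ → ℤ) : Prop :=
  (∃ k : ℕ, 1 ≤ k ∧ ∃ c : ℕ → ℤ, c k ≠ 0 ∧
    ∀ n, k ≤ n → u n = ∑ i ∈ Finset.Icc 1 k, c i * u (n - i)) ∧
  (∀ m n : ℕ, 1 ≤ m → m ∣ n → u m ∣ u n)

theorem stmt7 (u : ℕ → ℤ) (hu : IsLinearDivisionSequence u)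
    (m : ℕ) (hm : 1 ≤ m) (hum : u m = 0) :
    ∃ D : Finset ℕ, D.Nonempty ∧ (∀ d ∈ D, 0 < d) ∧
      ∀ n : ℕ, 1 ≤ n → (u n = 0 ↔ ∃ d ∈ D, d ∣ n) := by
  obtain ⟨⟨k, hk, c, hck, hrec⟩, hdvd⟩ := hu
  have hrec' : LDSaux.SatRec k c u := hrec
  obtain ⟨q, hqge, hq⟩ := Nat.exists_infinite_primes ((c k).natAbs + 1)
  obtain ⟨q', hq'ge, hq'⟩ := Nat.exists_infinite_primes (q + 1)
  have hqq' : q ≠ q' := by omega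
  have hcq : ¬ (q:ℤ) ∣ c k := by
    intro h
    have h1 := Int.natAbs_dvd_natAbs.mpr h
    rw [Int.natAbs_natCast] at h1
    have h2 := Nat.le_of_dvd (Int.natAbs_pos.mpr hck) h1
    omega
  have hcq' : ¬ (q':ℤ) ∣ c k := by
    intro h
    have h1 := Int.natAbs_dvd_natAbs.mpr h
    rw [Int.natAbs_natCast] at h1
    have h2 := Nat.le_of_dvd (Int.natAbs_pos.mpr hck) h1
    omega
  obtain ⟨Λ, hΛ1, hΛ⟩ := LDSaux.exists_strongPer_prime hk hq hcq
  obtain ⟨Λ', hΛ'1, hΛ'⟩ := LDSaux.exists_strongPer_prime hk hq' hcq'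
  set B := Λ * Λ' with hB
  have hPrimB : ∀ n, LDSaux.Prim u n → n ≤ B := by
    intro n hn
    obtain ⟨a, ha⟩ := LDSaux.prim_bound_aux hrec' hdvd hq hΛ1 hΛ hn
    obtain ⟨b, hb⟩ := LDSaux.prim_bound_aux hrec' hdvd hq' hΛ'1 hΛ' hn
    have hn0 : n ≠ 0 := by have := hn.1; omega
    set α := n.factorization q with hα
    have hsplit : q ^ α * (n / q ^ α) = n := Nat.ordProj_mul_ordCompl_eq_self n q
    have hcop : Nat.Coprime q (n / q ^ α) := Nat.coprime_ordCompl hq hn0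
    have hd : (n / q ^ α) ∣ Λ := by
      have h1 : (n / q ^ α) ∣ Λ * q ^ a :=
        dvd_trans (Nat.ordCompl_dvd n q) ha
      exact (Nat.Coprime.pow_right a hcop.symm).dvd_of_dvd_mul_right h1
    have hqα : q ^ α ∣ Λ' := by
      have h1 : q ^ α ∣ Λ' * q' ^ b := dvd_trans (Nat.ordProj_dvd n q) hb
      have hc2 : Nat.Coprime (q ^ α) (q' ^ b) :=
        Nat.Coprime.pow α b ((Nat.coprime_primes hq hq').mpr hqq')
      exact hc2.dvd_of_dvd_mul_right h1
    calc n = q ^ α * (n / q ^ α) := hsplit.symm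
      _ ≤ Λ' * Λ := Nat.mul_le_mul (Nat.le_of_dvd (by omega) hqα)
          (Nat.le_of_dvd (by omega) hd)
      _ = B := by rw [hB, mul_comm]
  refine ⟨(Finset.Icc 1 B).filter (fun d => u d = 0), ?_, ?_, ?_⟩
  · obtain ⟨d, hdm, hpd⟩ := LDSaux.exists_prim_dvd m hm hum
    exact ⟨d, Finset.mem_filter.mpr
      ⟨Finset.mem_Icc.mpr ⟨hpd.1, hPrimB d hpd⟩, hpd.2.1⟩⟩
  · intro d hd
    have h1 := (Finset.mem_filter.mp hd).1
    rw [Finset.mem_Icc] at h1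
    omega
  · intro n hn
    constructor
    · intro hun
      obtain ⟨d, hdn, hpd⟩ := LDSaux.exists_prim_dvd n hn hun
      exact ⟨d, Finset.mem_filter.mpr
        ⟨Finset.mem_Icc.mpr ⟨hpd.1, hPrimB d hpd⟩, hpd.2.1⟩, hdn⟩
    · rintro ⟨d, hd, hdn⟩
      obtain ⟨h1, h2⟩ := Finset.mem_filter.mp hd
      rw [Finset.mem_Icc] at h1
      have h3 := hdvd d n h1.1 hdn
      rw [h2] at h3
      exact zero_dvd_iff.mp h3
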